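/- Let A = {v_1, …, v_n} and B = {u_1, …, u_n} be two cross-sections in X^* of the same cardinality, and let ψ be the homeomorphism of X^ω defined by ψ(v_i·w) = u_i·w for all i and all w ∈ X^ω. Then ψ is synchronously automatic. Consequently, every element of the Higman–Thompson group V_{|X|} is a synchronously automatic homeomorphism of X^ω. -/
import Mathlib


/-- Prepend a finite word `v` to an infinite sequence `w`. -/
def prependWord {X : Type*} (v : List X) (w : ℕ → X) : ℕ → X :=
  fun n => if h : n < v.length then v.get ⟨n, h⟩ else w (n - v.length)

/-- The cylinder `v·X^ω` determined by a finite word `v`. -/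
def cylinder {X : Type*} (v : List X) : Set (ℕ → X) :=
  Set.range (prependWord v)

/-- The partial map `ψ_{u,v}` of a map `ψ : X^ω → X^ω`, viewed as the set of pairs
`(w, w')` with `ψ (v·w) = u·w'`. -/
def partialMap {X : Type*} (ψ : (ℕ → X) → (ℕ → X)) (u v : List X) :
    Set ((ℕ → X) × (ℕ → X)) :=
  {p | ψ (prependWord v p.1) = prependWord u p.2}

/-- A homeomorphism `ψ` of `X^ω` is synchronously automatic if the set of the partial maps
`ψ_{u,v}`, over all pairs of finite words `u, v` of equal length, is finite. -/
def SyncAutomatic {X : Type*} [TopologicalSpace X] (ψ : (ℕ → X) ≃ₜ (ℕ → X)) : Prop :=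
  {S : Set ((ℕ → X) × (ℕ → X)) |
    ∃ u v : List X, u.length = v.length ∧ S = partialMap (⇑ψ) u v}.Finite

lemma prepend_lt {X : Type*} (v : List X) (w : ℕ → X) {i : ℕ} (h : i < v.length) :
    prependWord v w i = v.get ⟨i, h⟩ := dif_pos h

lemma prepend_ge {X : Type*} (v : List X) (w : ℕ → X) {i : ℕ} (h : v.length ≤ i) :
    prependWord v w i = w (i - v.length) := dif_neg (Nat.not_lt.2 h)

lemma prependWord_append {X : Type*} (a b : List X) (w : ℕ → X) :
    prependWord (a ++ b) w = prependWord a (prependWord b w) := by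
  funext i
  rcases lt_or_ge i a.length with h | h
  · rw [prepend_lt a _ h, prepend_lt (a ++ b) w (by simp; omega)]
    simp [List.getElem_append_left h]
  · rw [prepend_ge a _ h]
    rcases lt_or_ge i (a.length + b.length) with h2 | h2
    · rw [prepend_lt (a ++ b) w (by simpa using h2), prepend_lt b _ (by omega)]
      simp [List.getElem_append_right, h]
    · rw [prepend_ge (a ++ b) w (by simpa using h2), prepend_ge b _ (by omega)]
      congr 1; simp only [List.length_append]; omega

lemma prependWord_injective {X : Type*} (v : List X) :
    Function.Injective (prependWord v) := by
  intro w w' h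
  funext i
  have := congrFun h (i + v.length)
  rwa [prepend_ge v w (Nat.le_add_left _ _), prepend_ge v w' (Nat.le_add_left _ _),
    Nat.add_sub_cancel] at this

lemma prepend_prefix {X : Type*} {a b : List X} {w w' : ℕ → X}
    (h : prependWord a w = prependWord b w') (hle : a.length ≤ b.length) :
    a = b.take a.length := by
  apply List.ext_get
  · simp [hle]
  intro i h1 h2
  have := congrFun h i
  rw [prepend_lt a w h1, prepend_lt b w' (lt_of_lt_of_le h1 hle)] at this
  simpa [List.getElem_take'] using this

/-- let `v_1, …, v_n` and `u_1, …, u_n` be two cross-sections of `X^ω`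
(families of finite words whose cylinders are pairwise disjoint and cover `X^ω`), and let
`ψ` be the homeomorphism of `X^ω` with `ψ(v_i·w) = u_i·w` for all `i` and `w`. Then `ψ` is
synchronously automatic. Consequently, every element of the Higman–Thompson group
`V_{|X|}` is a synchronously automatic homeomorphism of `X^ω`. -/
theorem higmanThompson_syncAutomatic
    {X : Type*} [Fintype X] [TopologicalSpace X] [DiscreteTopology X]
    (hX : 2 ≤ Fintype.card X)
    (n : ℕ) (v u : Fin n → List X)
    (hvdisj : ∀ i j : Fin n, i ≠ j → Disjoint (cylinder (v i)) (cylinder (v j)))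
    (hvcover : (⋃ i : Fin n, cylinder (v i)) = Set.univ)
    (hudisj : ∀ i j : Fin n, i ≠ j → Disjoint (cylinder (u i)) (cylinder (u j)))
    (hucover : (⋃ i : Fin n, cylinder (u i)) = Set.univ)
    (ψ : (ℕ → X) ≃ₜ (ℕ → X))
    (hψ : ∀ (i : Fin n) (w : ℕ → X), ψ (prependWord (v i) w) = prependWord (u i) w) :
    SyncAutomatic ψ := by
  classical
  obtain ⟨x0⟩ : Nonempty X := Fintype.card_pos_iff.mp (by omega)
  set M : ℕ := Finset.univ.sup (fun i : Fin n => max (v i).length (u i).length) with hM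
  have hsup : ∀ i, max (v i).length (u i).length ≤ M := fun i =>
    Finset.le_sup (f := fun i : Fin n => max (v i).length (u i).length) (Finset.mem_univ i)
  have hvM : ∀ i, (v i).length ≤ M := fun i => le_trans (le_max_left _ _) (hsup i)
  have huM : ∀ i, (u i).length ≤ M := fun i => le_trans (le_max_right _ _) (hsup i)
  set L : List X → Set ((ℕ → X) × (ℕ → X)) := fun d => {p | p.1 = prependWord d p.2}
    with hL
  set R : List X → Set ((ℕ → X) × (ℕ → X)) := fun d => {p | prependWord d p.1 = p.2}
    with hR
  have hTfin : (insert (∅ : Set ((ℕ → X) × (ℕ → X)))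
      (L '' {d | d.length ≤ M} ∪ R '' {d | d.length ≤ M} ∪
        (fun ab : List X × List X => partialMap (⇑ψ) ab.1 ab.2) ''
          ({d | d.length ≤ M} ×ˢ {d | d.length ≤ M}))).Finite := by
    refine Set.Finite.insert _ (Set.Finite.union (Set.Finite.union ?_ ?_) ?_)
    · exact (List.finite_length_le X M).image _
    · exact (List.finite_length_le X M).image _
    · exact ((List.finite_length_le X M).prod (List.finite_length_le X M)).image _
  apply hTfin.subset
  rintro S ⟨a, b, hlen, rfl⟩
  by_cases hsmall : b.length ≤ M
  · exact Set.mem_insert_of_mem _ (Or.inr ⟨(a, b), ⟨by simpa [hlen] using hsmall, hsmall⟩, rfl⟩)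
  push_neg at hsmall
  have hmem : prependWord b (fun _ => x0) ∈ ⋃ i, cylinder (v i) :=
    hvcover ▸ Set.mem_univ _
  rw [Set.mem_iUnion] at hmem
  obtain ⟨i, w1, hw1⟩ := hmem
  have hvib : (v i).length ≤ b.length := le_trans (hvM i) hsmall.le
  have hpre : v i = b.take (v i).length := prepend_prefix hw1 hvib
  obtain ⟨c, hb⟩ : ∃ c, b = v i ++ c :=
    ⟨b.drop (v i).length, by
      nth_rewrite 1 [← List.take_append_drop (v i).length b]; rw [← hpre]⟩
  have hblen : b.length = (v i).length + c.length := by rw [hb]; simp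
  have key : ∀ w, ψ (prependWord b w) = prependWord (u i ++ c) w := by
    intro w
    rw [hb, prependWord_append, hψ, ← prependWord_append]
  have hS : partialMap (⇑ψ) a b = {p | prependWord (u i ++ c) p.1 = prependWord a p.2} := by
    ext p
    simp only [partialMap, Set.mem_setOf_eq, key]
  have helen : (u i ++ c).length = (u i).length + c.length := by simp
  rcases le_or_gt (u i ++ c).length a.length with hcase | hcase
  · by_cases hpre2 : u i ++ c = a.take (u i ++ c).length
    · obtain ⟨d, ha⟩ : ∃ d, a = (u i ++ c) ++ d :=
        ⟨a.drop (u i ++ c).length, by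
          nth_rewrite 1 [← List.take_append_drop (u i ++ c).length a]; rw [← hpre2]⟩
      have hdlen : d.length ≤ M := by
        have halen : a.length = (u i ++ c).length + d.length := by rw [ha]; simp; omega
        have := hvM i
        omega
      refine Set.mem_insert_of_mem _ (Or.inl (Or.inl ⟨d, hdlen, ?_⟩))
      rw [hS]
      ext p
      simp only [hL, Set.mem_setOf_eq, ha, prependWord_append]
      exact ⟨fun h => by rw [h], fun h => prependWord_injective c (prependWord_injective (u i) h)⟩
    · refine Set.mem_insert_iff.mpr (Or.inl ?_)
      rw [hS]
      ext p
      simp only [Set.mem_empty_iff_false, iff_false, Set.mem_setOf_eq]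
      intro h
      exact hpre2 (prepend_prefix h hcase)
  · by_cases hpre2 : a = (u i ++ c).take a.length
    · obtain ⟨d, he2⟩ : ∃ d, u i ++ c = a ++ d :=
        ⟨(u i ++ c).drop a.length, by
          nth_rewrite 1 [← List.take_append_drop a.length (u i ++ c)]; rw [← hpre2]⟩
      have hdlen : d.length ≤ M := by
        have helen2 : (u i ++ c).length = a.length + d.length := by rw [he2]; simp
        have := huM i
        omega
      refine Set.mem_insert_of_mem _ (Or.inl (Or.inr ⟨d, hdlen, ?_⟩))
      rw [hS]
      ext p
      simp only [hR, Set.mem_setOf_eq, he2, prependWord_append]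
      exact ⟨fun h => by rw [← h], fun h => prependWord_injective a h⟩
    · refine Set.mem_insert_iff.mpr (Or.inl ?_)
      rw [hS]
      ext p
      simp only [Set.mem_empty_iff_false, iff_false, Set.mem_setOf_eq]
      intro h
      exact hpre2 (prepend_prefix h.symm hcase.le)
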